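/- arXiv:2007.01086 — 2 statements merged into one kernel-verified Lean document; each statement's English description precedes it below -/
import Mathlib

section
/- Fix k ≥ 2 and a nonempty T ⊆ 𝕋(k). Let y, z : T → Bool satisfy D_T(y) = D_T(z), and suppose #{t ∈ T : z t = true} ≤ #{t ∈ T : y t = true}; set w := #{t ∈ T : y t = true} − #{t ∈ T : z t = true} ∈ ℕ. Then: (i) for every ℓ ∈ ℕ with ℓ₀(k) ≤ ℓ and ℓ + w ≤ 2^k − 2, |F_y(k, ℓ+w)| = |F_z(k, ℓ)|; (ii) for every ℓ ∈ ℕ with ℓ < ℓ₀(k) ≤ ℓ + w, F_y(k, ℓ+w) = ∅; (iii) for every ℓ ∈ ℕ with ℓ ≤ 2^k − 2 < ℓ + w, F_z(k, ℓ) = ∅. -/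
/-- `𝕋(k)`: all non-constant index vectors `t : Fin k → Bool`. -/
def TT (k : ℕ) : Finset (Fin k → Bool) :=
  Finset.univ.filter fun t => (∃ i, t i = true) ∧ (∃ i, t i = false)

/-- A `(k,ℓ)`-labeling. -/
def IsLabeling (k ℓ : ℕ) (x : ↥(TT k) → Bool) : Prop :=
  (∀ i j : Fin k, i ≠ j →
      ∃ t : ↥(TT k), t.1 i = true ∧ t.1 j = false ∧ x t = true) ∧
  (Finset.univ.filter fun t : ↥(TT k) => x t = true).card = ℓ

/-- `F(k,ℓ)`: the type of all `(k,ℓ)`-labelings. -/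
def FF (k ℓ : ℕ) := {x : ↥(TT k) → Bool // IsLabeling k ℓ x}

/-- `F_y(k,ℓ)`: the `(k,ℓ)`-labelings agreeing with `y : T → Bool` on `T`. -/
def Fy (k ℓ : ℕ) (T : Finset (Fin k → Bool)) (hT : T ⊆ TT k) (y : ↥T → Bool) :
    Set (FF k ℓ) :=
  {x | ∀ t : ↥T, x.1 ⟨t.1, hT t.2⟩ = y t}

/-- The impact set `𝒟_T(y)` of `y : T → Bool`. -/
def impactSet (k : ℕ) (T : Finset (Fin k → Bool)) (y : ↥T → Bool) :
    Set (Fin k × Fin k) :=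
  {p | ∃ t : ↥T, t.1 p.1 = true ∧ t.1 p.2 = false ∧ y t = true}

/-- `ℓ₀(k)`: the minimal cardinality of a subset `T' ⊆ 𝕋(k)` such that for all
`i ≠ j` there is `t ∈ T'` with `t i = c` and `t j = e`. -/
noncomputable def ell0 (k : ℕ) : ℕ :=
  sInf {m : ℕ | ∃ T' : Finset (Fin k → Bool), T' ⊆ TT k ∧
    (∀ i j : Fin k, i ≠ j → ∃ t ∈ T', t i = true ∧ t j = false) ∧ T'.card = m}

namespace Aux

variable {k : ℕ} {T : Finset (Fin k → Bool)}

/-- substitute values of `u` on `T`. -/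
def subst (T : Finset (Fin k → Bool)) (u : ↥T → Bool) (x : ↥(TT k) → Bool) :
    ↥(TT k) → Bool :=
  fun t => if h : t.1 ∈ T then u ⟨t.1, h⟩ else x t

lemma subst_agree (hT : T ⊆ TT k) (u : ↥T → Bool) (x : ↥(TT k) → Bool) (t : ↥T) :
    subst T u x ⟨t.1, hT t.2⟩ = u t := by
  simp [subst, t.2]

lemma subst_not_mem (u : ↥T → Bool) (x : ↥(TT k) → Bool) (t : ↥(TT k)) (h : t.1 ∉ T) :
    subst T u x t = x t := by simp [subst, h]

lemma subst_subst (hT : T ⊆ TT k) (u v : ↥T → Bool) (x : ↥(TT k) → Bool)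
    (hxu : ∀ t : ↥T, x ⟨t.1, hT t.2⟩ = u t) :
    subst T u (subst T v x) = x := by
  funext t
  by_cases h : t.1 ∈ T
  · have h1 : subst T u (subst T v x) t = u ⟨t.1, h⟩ := by simp [subst, h]
    have h2 : (⟨t.1, hT h⟩ : ↥(TT k)) = t := Subtype.ext rfl
    rw [h1, ← hxu ⟨t.1, h⟩, h2]
  · simp [subst, h]

lemma count_split (x : ↥(TT k) → Bool) :
    (Finset.univ.filter fun t : ↥(TT k) => x t = true).card
      = ((Finset.univ.filter fun t : ↥(TT k) => x t = true).filter
            fun t => t.1 ∈ T).card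
        + ((Finset.univ.filter fun t : ↥(TT k) => x t = true).filter
            fun t => t.1 ∉ T).card := by
  rw [Finset.card_filter_add_card_filter_not]

lemma count_inT (hT : T ⊆ TT k) (x : ↥(TT k) → Bool) (u : ↥T → Bool)
    (hxu : ∀ t : ↥T, x ⟨t.1, hT t.2⟩ = u t) :
    ((Finset.univ.filter fun t : ↥(TT k) => x t = true).filter fun t => t.1 ∈ T).card
      = (Finset.univ.filter fun t : ↥T => u t = true).card := by
  refine Finset.card_bij'
    (fun (t : ↥(TT k)) (ht : t ∈ (Finset.univ.filter fun t : ↥(TT k) => x t = true).filter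
        fun t => t.1 ∈ T) => (⟨t.1, (Finset.mem_filter.mp ht).2⟩ : ↥T))
    (fun (t : ↥T) _ => (⟨t.1, hT t.2⟩ : ↥(TT k))) ?_ ?_ ?_ ?_
  · intro a ha
    have hmem : a.1 ∈ T := (Finset.mem_filter.mp ha).2
    have hx : x a = true := (Finset.mem_filter.mp (Finset.mem_filter.mp ha).1).2
    simp only [Finset.mem_filter, Finset.mem_univ, true_and]
    show u ⟨a.1, hmem⟩ = true
    have h2 : (⟨a.1, hT hmem⟩ : ↥(TT k)) = a := Subtype.ext rfl
    rw [← hxu ⟨a.1, hmem⟩, h2]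
    exact hx
  · intro a ha
    simp only [Finset.mem_filter, Finset.mem_univ, true_and] at ha ⊢
    exact ⟨by rw [hxu a]; exact ha, a.2⟩
  · intro a _; exact Subtype.ext rfl
  · intro a _; exact Subtype.ext rfl

/-- counting identity. -/
lemma count_eq (hT : T ⊆ TT k) (x : ↥(TT k) → Bool) (u : ↥T → Bool)
    (hxu : ∀ t : ↥T, x ⟨t.1, hT t.2⟩ = u t) :
    (Finset.univ.filter fun t : ↥(TT k) => x t = true).card
      = (Finset.univ.filter fun t : ↥T => u t = true).card
        + ((Finset.univ.filter fun t : ↥(TT k) => x t = true).filter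
            fun t => t.1 ∉ T).card := by
  rw [count_split (T := T) x, count_inT hT x u hxu]

lemma offT_subst (u : ↥T → Bool) (x : ↥(TT k) → Bool) :
    ((Finset.univ.filter fun t : ↥(TT k) => subst T u x t = true).filter
        fun t => t.1 ∉ T)
      = ((Finset.univ.filter fun t : ↥(TT k) => x t = true).filter
        fun t => t.1 ∉ T) := by
  ext t
  simp only [Finset.mem_filter, Finset.mem_univ, true_and]
  constructor
  · rintro ⟨h1, h2⟩; rw [subst_not_mem u x t h2] at h1; exact ⟨h1, h2⟩
  · rintro ⟨h1, h2⟩; rw [subst_not_mem u x t h2]; exact ⟨h1, h2⟩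

lemma TT_card (hk : 1 ≤ k) : (TT k).card = 2 ^ k - 2 := by
  have hne : (fun _ => false : Fin k → Bool) ≠ fun _ => true := by
    intro h
    have := congrFun h ⟨0, by omega⟩
    simp at this
  have heq : TT k = Finset.univ \ {fun _ => false, fun _ => true} := by
    ext t
    simp only [TT, Finset.mem_filter, Finset.mem_univ, true_and, Finset.mem_sdiff,
      Finset.mem_insert, Finset.mem_singleton]
    constructor
    · rintro ⟨⟨i, hi⟩, ⟨j, hj⟩⟩
      push_neg
      constructor
      · intro h; rw [h] at hi; simp at hi
      · intro h; rw [h] at hj; simp at hj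
    · intro h
      push_neg at h
      obtain ⟨h1, h2⟩ := h
      constructor
      · by_contra hc
        push_neg at hc
        exact h1 (funext fun i => by simpa using hc i)
      · by_contra hc
        push_neg at hc
        exact h2 (funext fun i => by simpa using hc i)
  rw [heq, Finset.card_sdiff_of_subset (Finset.subset_univ _), Finset.card_pair hne]
  congr 1
  simp [Fintype.card_fun]

set_option maxHeartbeats 1000000 in
lemma ell0_le_count (x : ↥(TT k) → Bool)
    (hx : ∀ i j : Fin k, i ≠ j →
      ∃ t : ↥(TT k), t.1 i = true ∧ t.1 j = false ∧ x t = true) :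
    ell0 k ≤ (Finset.univ.filter fun t : ↥(TT k) => x t = true).card := by
  set S := Finset.univ.filter fun t : ↥(TT k) => x t = true with hS
  have hsub : (S.image fun t => t.1) ⊆ TT k := by
    intro a ha
    obtain ⟨t, _, rfl⟩ := Finset.mem_image.mp ha
    exact t.2
  have hcov : ∀ i j : Fin k, i ≠ j →
      ∃ t ∈ S.image (fun t => t.1), t i = true ∧ t j = false := by
    intro i j hij
    obtain ⟨t, h1, h2, h3⟩ := hx i j hij
    exact ⟨t.1, Finset.mem_image.mpr ⟨t, by simp [hS, h3], rfl⟩, h1, h2⟩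
  have h1 : ell0 k ≤ (S.image fun t => t.1).card :=
    Nat.sInf_le ⟨S.image fun t => t.1, hsub, hcov, rfl⟩
  exact h1.trans Finset.card_image_le

lemma count_le (hk : 1 ≤ k) (x : ↥(TT k) → Bool) :
    (Finset.univ.filter fun t : ↥(TT k) => x t = true).card ≤ 2 ^ k - 2 := by
  calc (Finset.univ.filter fun t : ↥(TT k) => x t = true).card
      ≤ (Finset.univ : Finset ↥(TT k)).card := Finset.card_filter_le _ _
    _ = (TT k).card := by rw [Finset.card_univ, Fintype.card_coe]
    _ = 2 ^ k - 2 := TT_card hk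

end Aux

/-- If `y, z : T → Bool` have equal impact sets and
`w = #{t : y t} − #{t : z t} ≥ 0`, then (i) `|F_y(k,ℓ+w)| = |F_z(k,ℓ)|` for
`ℓ₀(k) ≤ ℓ` with `ℓ+w ≤ 2^k−2`; (ii) `F_y(k,ℓ+w) = ∅` when `ℓ < ℓ₀(k) ≤ ℓ+w`;
(iii) `F_z(k,ℓ) = ∅` when `ℓ ≤ 2^k−2 < ℓ+w`. -/
theorem impact_set_shift (k : ℕ) (hk : 2 ≤ k) (T : Finset (Fin k → Bool))
    (hT : T ⊆ TT k) (hTne : T.Nonempty) (y z : ↥T → Bool)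
    (hD : impactSet k T y = impactSet k T z)
    (hw : (Finset.univ.filter fun t : ↥T => z t = true).card ≤
          (Finset.univ.filter fun t : ↥T => y t = true).card) :
    (∀ ℓ : ℕ, ell0 k ≤ ℓ →
      ℓ + ((Finset.univ.filter fun t : ↥T => y t = true).card
            - (Finset.univ.filter fun t : ↥T => z t = true).card) ≤ 2 ^ k - 2 →
      Nat.card ↥(Fy k (ℓ + ((Finset.univ.filter fun t : ↥T => y t = true).card
            - (Finset.univ.filter fun t : ↥T => z t = true).card)) T hT y) =
        Nat.card ↥(Fy k ℓ T hT z)) ∧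
    (∀ ℓ : ℕ, ℓ < ell0 k →
      ell0 k ≤ ℓ + ((Finset.univ.filter fun t : ↥T => y t = true).card
            - (Finset.univ.filter fun t : ↥T => z t = true).card) →
      Fy k (ℓ + ((Finset.univ.filter fun t : ↥T => y t = true).card
            - (Finset.univ.filter fun t : ↥T => z t = true).card)) T hT y = ∅) ∧
    (∀ ℓ : ℕ, ℓ ≤ 2 ^ k - 2 →
      2 ^ k - 2 < ℓ + ((Finset.univ.filter fun t : ↥T => y t = true).card
            - (Finset.univ.filter fun t : ↥T => z t = true).card) →
      Fy k ℓ T hT z = ∅) := by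
  classical
  have key : ∀ (m : ℕ) (u v : ↥T → Bool) (x : FF k m),
      (∀ t : ↥T, x.1 ⟨t.1, hT t.2⟩ = u t) →
      (Finset.univ.filter fun t : ↥(TT k) => Aux.subst T v x.1 t = true).card
          + (Finset.univ.filter fun t : ↥T => u t = true).card
        = m + (Finset.univ.filter fun t : ↥T => v t = true).card := by
    intro m u v x hxu
    have e1 := Aux.count_eq hT x.1 u hxu
    have e2 := Aux.count_eq hT (Aux.subst T v x.1) v (Aux.subst_agree hT v x.1)
    rw [Aux.offT_subst] at e2
    rw [x.2.2] at e1
    omega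
  have condA : ∀ (u v : ↥T → Bool), impactSet k T u ⊆ impactSet k T v →
      ∀ (m : ℕ) (x : FF k m), (∀ t : ↥T, x.1 ⟨t.1, hT t.2⟩ = u t) →
      ∀ i j : Fin k, i ≠ j → ∃ t : ↥(TT k),
        t.1 i = true ∧ t.1 j = false ∧ Aux.subst T v x.1 t = true := by
    intro u v hsub m x hxu i j hij
    obtain ⟨t, h1, h2, h3⟩ := x.2.1 i j hij
    by_cases hmem : t.1 ∈ T
    · have hy : u ⟨t.1, hmem⟩ = true := by
        rw [← hxu ⟨t.1, hmem⟩]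
        have h4 : (⟨t.1, hT hmem⟩ : ↥(TT k)) = t := Subtype.ext rfl
        rw [h4]; exact h3
      have hin : (i, j) ∈ impactSet k T u := ⟨⟨t.1, hmem⟩, h1, h2, hy⟩
      obtain ⟨s, hs1, hs2, hs3⟩ := hsub hin
      exact ⟨⟨s.1, hT s.2⟩, hs1, hs2, by rw [Aux.subst_agree hT]; exact hs3⟩
    · exact ⟨t, h1, h2, by rw [Aux.subst_not_mem v x.1 t hmem]; exact h3⟩
  refine ⟨?_, ?_, ?_⟩
  · -- part (i)
    intro ℓ hℓ0 hup
    apply Nat.card_congr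
    refine
      { toFun := fun x => ⟨⟨Aux.subst T z x.1.1,
          condA y z hD.subset _ x.1 x.2, by
            have h := key _ y z x.1 x.2
            omega⟩, fun t => Aux.subst_agree hT z x.1.1 t⟩
        invFun := fun x => ⟨⟨Aux.subst T y x.1.1,
          condA z y hD.symm.subset _ x.1 x.2, by
            have h := key _ z y x.1 x.2
            omega⟩, fun t => Aux.subst_agree hT y x.1.1 t⟩
        left_inv := ?_
        right_inv := ?_ }
    · intro x
      exact Subtype.ext (Subtype.ext (Aux.subst_subst hT y z x.1.1 x.2))
    · intro x
      exact Subtype.ext (Subtype.ext (Aux.subst_subst hT z y x.1.1 x.2))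
  · -- part (ii)
    intro ℓ hℓ hℓw
    rw [Set.eq_empty_iff_forall_notMem]
    intro x hx
    have hc := key _ y z x hx
    have hcond := condA y z hD.subset _ x hx
    have hle := Aux.ell0_le_count (Aux.subst T z x.1) hcond
    have hm := x.2.2
    omega
  · -- part (iii)
    intro ℓ hℓ hgt
    rw [Set.eq_empty_iff_forall_notMem]
    intro x hx
    have hc := key _ z y x hx
    have hub := Aux.count_le (by omega) (Aux.subst T y x.1)
    omega
end

section
/- Let n ≥ 1, k ≥ 1, and let P : Fin k → Finset (Fin n) be a constructive ordered k-cover of Fin n. Call a subset C of Fin n an intersector of P if there exists a function f : Fin k → Fin n with f i ∈ P i for all i whose image is exactly C. Let 𝒞 be the collection of minimal intersectors, i.e. intersectors C such that no intersector C' ≠ C satisfies C' ⊆ C. Then 𝒞 forms a constructive unordered cover of Fin n: the union of the members of 𝒞 equals Fin n, and for any two distinct C, C' ∈ 𝒞 the difference C \ C' is nonempty. -/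
/-- A constructive ordered `k`-cover of `Fin n`. -/
def IsCCover (n k : ℕ) (P : Fin k → Finset (Fin n)) : Prop :=
  Finset.univ.biUnion P = Finset.univ ∧ ∀ i j : Fin k, i ≠ j → (P i \ P j).Nonempty

/-- `C` is an intersector of `P`: there is `f : Fin k → Fin n` choosing an element
of each `P i`, whose image is exactly `C`. -/
def IsIntersector (n k : ℕ) (P : Fin k → Finset (Fin n)) (C : Finset (Fin n)) : Prop :=
  ∃ f : Fin k → Fin n, (∀ i, f i ∈ P i) ∧ Finset.univ.image f = C

/-- `C` is a minimal intersector of `P`: an intersector such that no intersector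
`C' ≠ C` satisfies `C' ⊆ C`. -/
def IsMinIntersector (n k : ℕ) (P : Fin k → Finset (Fin n)) (C : Finset (Fin n)) : Prop :=
  IsIntersector n k P C ∧ ∀ C', IsIntersector n k P C' → C' ⊆ C → C' = C

/-- An intersector is a transversal. -/
lemma intersector_trans {n k : ℕ} {P : Fin k → Finset (Fin n)} {C : Finset (Fin n)}
    (h : IsIntersector n k P C) : ∀ i, (C ∩ P i).Nonempty := by
  obtain ⟨f, hf, hC⟩ := h
  intro i
  exact ⟨f i, Finset.mem_inter.2 ⟨hC ▸ Finset.mem_image_of_mem f (Finset.mem_univ i), hf i⟩⟩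

/-- A minimal transversal is a minimal intersector. -/
lemma minTrans_isMinIntersector {n k : ℕ} {P : Fin k → Finset (Fin n)} {T : Finset (Fin n)}
    (hT : ∀ i, (T ∩ P i).Nonempty)
    (hmin : ∀ T', (∀ i, (T' ∩ P i).Nonempty) → T' ⊆ T → T' = T) :
    IsMinIntersector n k P T := by
  classical
  have hsing : ∀ t ∈ T, ∃ i, T ∩ P i ⊆ {t} := by
    intro t ht
    by_contra h
    push_neg at h
    have herase : ∀ i, ((T.erase t) ∩ P i).Nonempty := by
      intro i
      obtain ⟨x, hx, hxt⟩ := Finset.not_subset.1 (h i)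
      rw [Finset.mem_inter] at hx
      refine ⟨x, Finset.mem_inter.2 ⟨Finset.mem_erase.2 ⟨?_, hx.1⟩, hx.2⟩⟩
      simpa using hxt
    exact Finset.erase_eq_self.1 (hmin _ herase (Finset.erase_subset t T)) ht
  refine ⟨⟨fun i => (hT i).choose, fun i => (Finset.mem_inter.1 (hT i).choose_spec).2, ?_⟩, ?_⟩
  · apply Finset.Subset.antisymm
    · intro x hx
      rw [Finset.mem_image] at hx
      obtain ⟨i, -, rfl⟩ := hx
      exact (Finset.mem_inter.1 (hT i).choose_spec).1
    · intro t ht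
      obtain ⟨i, hi⟩ := hsing t ht
      have := hi (hT i).choose_spec
      rw [Finset.mem_singleton] at this
      rw [Finset.mem_image]
      exact ⟨i, Finset.mem_univ i, this⟩
  · intro C' hC' hsub
    exact hmin C' (intersector_trans hC') hsub

/-- The collection of minimal intersectors of a constructive ordered `k`-cover forms
a constructive unordered cover of `Fin n`: its union is all of `Fin n` and no two
distinct members are subsets of each other. -/
theorem min_intersectors_constructive_cover (n k : ℕ) (hn : 1 ≤ n) (hk : 1 ≤ k)
    (P : Fin k → Finset (Fin n)) (hP : IsCCover n k P) :
    (∀ p : Fin n, ∃ C : Finset (Fin n), IsMinIntersector n k P C ∧ p ∈ C) ∧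
    (∀ C C' : Finset (Fin n), IsMinIntersector n k P C → IsMinIntersector n k P C' →
      C ≠ C' → (C \ C').Nonempty) := by
  classical
  constructor
  · intro p
    have hp : p ∈ Finset.univ.biUnion P := hP.1 ▸ Finset.mem_univ p
    rw [Finset.mem_biUnion] at hp
    obtain ⟨i0, -, hi0⟩ := hp
    have hg : ∀ j : Fin k, ∃ x, x ∈ P j ∧ (j = i0 → x = p) ∧ (j ≠ i0 → x ∉ P i0) := by
      intro j
      by_cases h : j = i0
      · exact ⟨p, h ▸ hi0, fun _ => rfl, fun hj => absurd h hj⟩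
      · obtain ⟨x, hx⟩ := hP.2 j i0 h
        rw [Finset.mem_sdiff] at hx
        exact ⟨x, hx.1, fun h' => absurd h' h, fun _ => hx.2⟩
    choose g hg1 hg2 hg3 using hg
    set T0 := Finset.univ.image g with hT0
    have hT0trans : ∀ i, (T0 ∩ P i).Nonempty := fun i =>
      ⟨g i, Finset.mem_inter.2 ⟨Finset.mem_image_of_mem g (Finset.mem_univ i), hg1 i⟩⟩
    have hT0p : T0 ∩ P i0 ⊆ {p} := by
      intro x hx
      rw [Finset.mem_inter, hT0, Finset.mem_image] at hx
      obtain ⟨⟨j, -, rfl⟩, hx2⟩ := hx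
      by_cases hj : j = i0
      · rw [Finset.mem_singleton]; exact hg2 j hj
      · exact absurd hx2 (hg3 j hj)
    -- find a minimum-cardinality transversal inside T0
    set s := T0.powerset.filter (fun T => ∀ i, (T ∩ P i).Nonempty) with hs
    have hT0s : T0 ∈ s := Finset.mem_filter.2 ⟨Finset.mem_powerset.2 (Finset.Subset.refl _), hT0trans⟩
    obtain ⟨m, hm, hmcard⟩ := Finset.exists_min_image s Finset.card ⟨T0, hT0s⟩
    rw [hs, Finset.mem_filter, Finset.mem_powerset] at hm
    have hmmin : ∀ T', (∀ i, (T' ∩ P i).Nonempty) → T' ⊆ m → T' = m := by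
      intro T' hT' hsub
      have hT's : T' ∈ s := Finset.mem_filter.2 ⟨Finset.mem_powerset.2 (hsub.trans hm.1), hT'⟩
      exact Finset.eq_of_subset_of_card_le hsub (hmcard T' hT's)
    have hpm : p ∈ m := by
      obtain ⟨x, hx⟩ := hm.2 i0
      have hx' : x ∈ T0 ∩ P i0 :=
        Finset.mem_inter.2 ⟨hm.1 (Finset.mem_inter.1 hx).1, (Finset.mem_inter.1 hx).2⟩
      have := hT0p hx'
      rw [Finset.mem_singleton] at this
      exact this ▸ (Finset.mem_inter.1 hx).1
    exact ⟨m, minTrans_isMinIntersector hm.2 hmmin, hpm⟩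
  · intro C C' hC hC' hne
    rw [Finset.sdiff_nonempty]
    intro hsub
    exact hne (hC'.2 C hC.1 hsub)
end
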